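/- Let 0 < s < 1 and let v = (v₁, v₂) ∈ ℝ² with |v| < 1, and set Γ = 1/√(1 − |v|²), R = √((1 − |v|²s²) − (1 − s²)v₁²), and λ₁ = (v₁(1 − s²) − s·Γ⁻¹·R)/(1 − |v|²s²), λ₂ = (v₁(1 − s²) + s·Γ⁻¹·R)/(1 − |v|²s²), λ₃ = v₁. Then max{|λ₁|, |λ₂|, |λ₃|} = (|v₁|(1 − s²) + s·Γ⁻¹·R)/(1 − |v|²s²). -/
import Mathlib


/-- The maximum of the absolute values of the eigenvalues `λ₁, λ₂, λ₃ = v₁` of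
the x-directional flux Jacobian of the 2D relativistic hydrodynamics equations
equals the spectral radius `Λ = (|v₁|(1-s²) + s Γ⁻¹ R)/(1 - |v|² s²)`. -/
theorem spectral_radius_eq_max (s v1 v2 Γ R lam1 lam2 lam3 : ℝ)
    (hs0 : 0 < s) (hs1 : s < 1)
    (hv : Real.sqrt (v1 ^ 2 + v2 ^ 2) < 1)
    (hΓ : Γ = 1 / Real.sqrt (1 - (v1 ^ 2 + v2 ^ 2)))
    (hR : R = Real.sqrt ((1 - (v1 ^ 2 + v2 ^ 2) * s ^ 2) - (1 - s ^ 2) * v1 ^ 2))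
    (hl1 : lam1 = (v1 * (1 - s ^ 2) - s * Γ⁻¹ * R) / (1 - (v1 ^ 2 + v2 ^ 2) * s ^ 2))
    (hl2 : lam2 = (v1 * (1 - s ^ 2) + s * Γ⁻¹ * R) / (1 - (v1 ^ 2 + v2 ^ 2) * s ^ 2))
    (hl3 : lam3 = v1) :
    max (max |lam1| |lam2|) |lam3| =
      (|v1| * (1 - s ^ 2) + s * Γ⁻¹ * R) / (1 - (v1 ^ 2 + v2 ^ 2) * s ^ 2) := by
  have hV0 : (0:ℝ) ≤ v1 ^ 2 + v2 ^ 2 := by positivity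
  have hV1 : v1 ^ 2 + v2 ^ 2 < 1 := by
    nlinarith [Real.sq_sqrt hV0, Real.sqrt_nonneg (v1 ^ 2 + v2 ^ 2)]
  have hD : 0 < 1 - (v1 ^ 2 + v2 ^ 2) * s ^ 2 := by nlinarith
  have hΓinv : Γ⁻¹ = Real.sqrt (1 - (v1 ^ 2 + v2 ^ 2)) := by
    rw [hΓ, one_div, inv_inv]
  set g := Real.sqrt (1 - (v1 ^ 2 + v2 ^ 2)) with hg
  have hGnn : 0 ≤ g := Real.sqrt_nonneg _
  have hG2 : g ^ 2 = 1 - (v1 ^ 2 + v2 ^ 2) := Real.sq_sqrt (by linarith)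
  have hRnn : 0 ≤ R := hR ▸ Real.sqrt_nonneg _
  have hBnn : 0 ≤ s * Γ⁻¹ * R := by rw [hΓinv]; positivity
  have hv1sq : v1 ^ 2 ≤ v1 ^ 2 + v2 ^ 2 := by nlinarith [sq_nonneg v2]
  -- key inequality : |v1| * s * g ≤ R
  have hkey : |v1| * s * g ≤ R := by
    rw [hR]
    apply Real.le_sqrt_of_sq_le
    have : (|v1| * s * g) ^ 2 = v1 ^ 2 * s ^ 2 * (1 - (v1 ^ 2 + v2 ^ 2)) := by
      rw [mul_pow, mul_pow, sq_abs, hG2]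
    rw [this]
    nlinarith [hD, hv1sq]
  -- max of first two
  have hmax12 : max |lam1| |lam2| =
      (|v1| * (1 - s ^ 2) + s * Γ⁻¹ * R) / (1 - (v1 ^ 2 + v2 ^ 2) * s ^ 2) := by
    rw [hl1, hl2, abs_div, abs_div, abs_of_pos hD,
      max_div_div_right hD.le]
    congr 1
    set A := v1 * (1 - s ^ 2) with hA
    set B := s * Γ⁻¹ * R with hB
    have hAabs : |v1| * (1 - s ^ 2) = |A| := by
      rw [hA, abs_mul, abs_of_pos (by nlinarith : (0:ℝ) < 1 - s ^ 2)]
    rw [hAabs]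
    rcases le_or_gt 0 A with h | h
    · rw [max_eq_right, abs_of_nonneg (by linarith : (0:ℝ) ≤ A + B),
        abs_of_nonneg h]
      rw [abs_of_nonneg (by linarith : (0:ℝ) ≤ A + B)]
      rcases abs_cases (A - B) with ⟨he, _⟩ | ⟨he, _⟩ <;> rw [he] <;> linarith [abs_nonneg (A - B), abs_of_nonneg h]
    · rw [max_eq_left, abs_of_nonpos (by linarith : A - B ≤ 0),
        abs_of_neg h]
      · ring
      rw [abs_of_nonpos (by linarith : A - B ≤ 0)]
      rcases abs_cases (A + B) with ⟨he, _⟩ | ⟨he, _⟩ <;> rw [he] <;> linarith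
  rw [hmax12, hl3]
  apply max_eq_left
  rw [le_div_iff₀ hD]
  have hmul : |v1| * s * g * (s * g) ≤ R * (s * g) :=
    mul_le_mul_of_nonneg_right hkey (by positivity)
  have h2 : |v1| * s ^ 2 * (1 - (v1 ^ 2 + v2 ^ 2)) ≤ s * g * R := by
    calc |v1| * s ^ 2 * (1 - (v1 ^ 2 + v2 ^ 2)) = |v1| * s * g * (s * g) := by
          rw [← hG2]; ring
      _ ≤ R * (s * g) := hmul
      _ = s * g * R := by ring
  rw [hΓinv]
  nlinarith [h2]
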